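/- The minimum weight of a Hamiltonian cycle on S = V ∪ {r} conforming to the star T equals n + 1 if and only if G contains a Hamiltonian path. (Consequently, the minimum-weight double-tree shortcutting problem for general metric instances encodes the Hamiltonian path problem.) -/

import Mathlib

/-- A rooted tree on a vertex type `V`, given by a parent function under which
every vertex reaches the root. -/
structure ParentTree (V : Type) where
  root : V
  parent : V → V
  parent_root : parent root = root
  reaches_root : ∀ v, ∃ k, parent^[k] v = root

namespace ParentTree

variable {V : Type}

/-- The set `C(u)` of children of `u`. -/
def children (T : ParentTree V) (u : V) : Set V := {v | T.parent v = u ∧ v ≠ u}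

/-- The set `T(u)` of descendants of `u` (including `u` itself). -/
def desc (T : ParentTree V) (u : V) : Set V := {b | ∃ k, T.parent^[k] b = u}

/-- For a set `U` of siblings, `T(U) = ⋃_{u ∈ U} T(u)`. -/
def descU (T : ParentTree V) (U : Set V) : Set V := ⋃ u ∈ U, T.desc u

end ParentTree

/-- The set of points occurring in a list. -/
def listSet {V : Type} (l : List V) : Set V := {x | x ∈ l}

/-- The weight of a Hamiltonian cycle given as a list: the sum of distances
over cyclically consecutive pairs. -/
def cycleWeight {V X : Type} [MetricSpace X] (f : V → X) (h : List V) : ℝ :=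
  ((h.zip (h.rotate 1)).map fun p => dist (f p.1) (f p.2)).sum

/-- A Hamiltonian cycle on the point set: a cyclic ordering of all points,
represented as a duplicate-free list containing every point. -/
def IsHamCycle {V : Type} (h : List V) : Prop := h.Nodup ∧ ∀ x : V, x ∈ h

/-- The set `A` forms a contiguous cyclic arc of the cycle `h`. -/
def IsCyclicArc {V : Type} (A : Set V) (h : List V) : Prop :=
  ∃ i : ℕ, listSet ((h.rotate i).take A.ncard) = A

/-- A Hamiltonian cycle conforms to the rooted tree `T` if for every node `u`
the set `T(u)` of descendants of `u` forms a contiguous cyclic arc of the cycle. -/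
def CycleConforms {V : Type} (T : ParentTree V) (h : List V) : Prop :=
  ∀ u : V, IsCyclicArc (T.desc u) h

/-- The metric on `S = V ∪ {r}` (with `r = none`) induced by the graph `G`:
`dist(r,x) = 1`, and for distinct `x, y ∈ V`, `dist(x,y) = 1` if `x,y` are
adjacent in `G` and `2` otherwise. -/
noncomputable def gDist {V : Type} [DecidableEq V] (G : SimpleGraph V)
    [DecidableRel G.Adj] : Option V → Option V → ℝ
  | none, none => 0
  | none, some _ => 1
  | some _, none => 1
  | some x, some y => if x = y then 0 else if G.Adj x y then 1 else 2

/-- The weight of a cyclic ordering with respect to a distance function. -/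
noncomputable def cycleWeightD {V : Type} (d : V → V → ℝ) (h : List V) : ℝ :=
  ((h.zip (h.rotate 1)).map fun p => d p.1 p.2).sum

section helpers

variable {X : Type}

lemma zipRot_length (h : List X) : (h.zip (h.rotate 1)).length = h.length := by
  simp

lemma zipRot_getElem (h : List X) (i : ℕ) (hi : i < (h.zip (h.rotate 1)).length) :
    (h.zip (h.rotate 1))[i] =
      (h[i]'(by simpa using hi),
       h[(i+1) % h.length]'(Nat.mod_lt _ (by simp at hi; omega))) := by
  rw [List.getElem_zip, List.getElem_rotate]

lemma zipRot_mem (h : List X) {p : X × X} (hp : p ∈ h.zip (h.rotate 1)) :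
    ∃ i : ℕ, ∃ hi : i < h.length,
      p = (h[i]'hi, h[(i+1) % h.length]'(Nat.mod_lt _ (by omega))) := by
  obtain ⟨i, hi, hip⟩ := List.mem_iff_getElem.1 hp
  exact ⟨i, by simpa using hi, by rw [← hip, zipRot_getElem]⟩

lemma zipRot_mem_of (h : List X) (i : ℕ) (hi : i < h.length) :
    (h[i]'hi, h[(i+1) % h.length]'(Nat.mod_lt _ (by omega))) ∈ h.zip (h.rotate 1) := by
  rw [List.mem_iff_getElem]
  exact ⟨i, by simpa using hi, by rw [zipRot_getElem]⟩

lemma zipRot_ne {h : List X} (hnd : h.Nodup) (h2 : 2 ≤ h.length)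
    {p : X × X} (hp : p ∈ h.zip (h.rotate 1)) : p.1 ≠ p.2 := by
  obtain ⟨i, hi, rfl⟩ := zipRot_mem h hp
  simp only [ne_eq]
  intro hEq
  have := (hnd.getElem_inj_iff).1 hEq
  rcases Nat.lt_or_ge (i+1) h.length with hl | hl
  · rw [Nat.mod_eq_of_lt hl] at this; omega
  · have : i % h.length = i := Nat.mod_eq_of_lt hi
    have h0 : (i+1) % h.length = 0 := by
      have : i + 1 = h.length := by omega
      simp [this]
    omega

lemma zipRot_rotate {h : List X} (k : ℕ) {p : X × X}
    (hp : p ∈ (h.rotate k).zip ((h.rotate k).rotate 1)) : p ∈ h.zip (h.rotate 1) := by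
  obtain ⟨i, hi, rfl⟩ := zipRot_mem _ hp
  rw [List.length_rotate] at hi
  have hlen : (h.rotate k).length = h.length := List.length_rotate _ _
  have e1 : (h.rotate k)[i]'(by omega) = h[(i+k) % h.length]'(Nat.mod_lt _ (by omega)) :=
    List.getElem_rotate _ _ _ _
  have e2 : (h.rotate k)[(i+1) % (h.rotate k).length]'(Nat.mod_lt _ (by omega)) =
      h[(((i+1) % h.length)+k) % h.length]'(Nat.mod_lt _ (by omega)) := by
    simp only [hlen]
    exact List.getElem_rotate _ _ _ _
  have emod : (((i+1) % h.length)+k) % h.length = ((i+k) % h.length + 1) % h.length := by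
    rw [Nat.mod_add_mod, Nat.mod_add_mod]
    ring_nf
  rw [e1, e2]
  simp only [emod]
  exact zipRot_mem_of h ((i+k) % h.length) (Nat.mod_lt _ (by omega))

lemma take_one_of_ne_nil {l : List X} (hl : l ≠ []) : l.take 1 = [l[0]'(by
    cases l with | nil => simp at hl | cons a t => simp)] := by
  cases l with
  | nil => simp at hl
  | cons a t => simp

lemma zip_append_last : ∀ (t : List X) (a c : X),
    (a :: t).zip (t ++ [c]) = (a :: t).zip t ++ [((a :: t).getLast (by simp), c)]
  | [], a, c => by simp
  | b :: s, a, c => by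
    have ih := zip_append_last s b c
    simp only [List.cons_append, List.zip_cons_cons] at *
    rw [ih]
    have hgl : (a :: b :: s).getLast (by simp) = (b :: s).getLast (by simp) :=
      List.getLast_cons (by simp)
    rw [hgl]

lemma zipRot_decomp (a : X) (t : List X) :
    (a :: t).zip ((a :: t).rotate 1) =
      (a :: t).zip t ++ [((a :: t).getLast (by simp), a)] := by
  have : (a :: t).rotate 1 = t ++ [a] := by
    simp [List.rotate_cons_succ, List.rotate_zero]
  rw [this, zip_append_last]

lemma len_le_sum : ∀ (L : List ℝ), (∀ x ∈ L, 1 ≤ x) → (L.length : ℝ) ≤ L.sum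
  | [], _ => by simp
  | x :: L, h => by
    have ih := len_le_sum L (fun y hy => h y (by simp [hy]))
    have hx := h x (by simp)
    simp only [List.length_cons, List.sum_cons, Nat.cast_add, Nat.cast_one]
    linarith

lemma all_one_of_sum_lt (L : List ℝ) (h12 : ∀ x ∈ L, x = 1 ∨ x = 2)
    (hs : L.sum < L.length + 1) : ∀ x ∈ L, x = 1 := by
  intro x hx
  rcases h12 x hx with h1 | h2
  · exact h1
  · exfalso
    have hperm : List.Perm L (x :: L.erase x) := List.perm_cons_erase hx
    have hsum : L.sum = x + (L.erase x).sum := by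
      rw [hperm.sum_eq]; simp
    have hlen : (L.erase x).length = L.length - 1 := List.length_erase_of_mem hx
    have hone : 1 ≤ L.length := by
      cases L with | nil => simp at hx | cons a t => simp
    have hge : ((L.erase x).length : ℝ) ≤ (L.erase x).sum :=
      len_le_sum _ (fun y hy => by
        rcases h12 y (List.mem_of_mem_erase hy) with h | h <;> rw [h] <;> norm_num)
    subst h2
    rw [hsum] at hs
    rw [hlen, Nat.cast_sub hone] at hge
    push_cast at hge hs
    linarith

lemma pathSum_chain (d : X → X → ℝ) : ∀ (l : List X), l ≠ [] →
    l.Chain' (fun x y => d x y = 1) →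
    ((l.zip l.tail).map fun p => d p.1 p.2).sum = l.length - 1
  | [], h, _ => absurd rfl h
  | [a], _, _ => by simp
  | a :: b :: t, _, hc => by
    have ih := pathSum_chain d (b :: t) (by simp) hc.tail
    have hab : d a b = 1 := (List.isChain_cons_cons.1 hc).1
    simp only [List.tail_cons, List.zip_cons_cons, List.map_cons, List.sum_cons, hab,
      List.length_cons] at *
    rw [ih]
    push_cast
    ring

lemma all_some_eq_map {W : Type} : ∀ (t : List (Option W)), (∀ x ∈ t, x ≠ none) →
    t = (t.filterMap id).map some
  | [], _ => rfl
  | a :: t, h => by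
    obtain ⟨v, rfl⟩ := Option.ne_none_iff_exists'.1 (h a (by simp))
    have ih := all_some_eq_map t (fun x hx => h x (by simp [hx]))
    simp only [List.filterMap_cons, id, List.map_cons]
    exact congrArg (some v :: ·) ih

end helpers
section main

variable {V : Type} [Fintype V] [DecidableEq V] (G : SimpleGraph V) [DecidableRel G.Adj]

lemma gd_cases {x y : Option V} (hxy : x ≠ y) :
    gDist G x y = 1 ∨ gDist G x y = 2 := by
  match x, y with
  | none, none => exact absurd rfl hxy
  | none, some v => left; rfl
  | some v, none => left; rfl
  | some v, some w =>
    have hvw : v ≠ w := fun h => hxy (by rw [h])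
    by_cases h : G.Adj v w
    · left; simp [gDist, hvw, h]
    · right; simp [gDist, hvw, h]

lemma gd_one_le {x y : Option V} (hxy : x ≠ y) : 1 ≤ gDist G x y := by
  rcases gd_cases G hxy with h | h <;> rw [h] <;> norm_num

lemma adj_of_gd_one {x y : V} (h : gDist G (some x) (some y) = 1) : G.Adj x y := by
  by_cases hxy : x = y
  · simp [gDist, hxy] at h
  · by_cases ha : G.Adj x y
    · exact ha
    · simp [gDist, hxy, ha] at h

lemma gd_of_adj {x y : V} (h : G.Adj x y) : gDist G (some x) (some y) = 1 := by
  simp [gDist, h.ne, h]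

lemma ham_length {h : List (Option V)} (hh : IsHamCycle h) :
    h.length = Fintype.card V + 1 := by
  have huniv : h.toFinset = Finset.univ :=
    Finset.eq_univ_iff_forall.2 fun x => List.mem_toFinset.2 (hh.2 x)
  have := List.toFinset_card_of_nodup hh.1
  rw [huniv, Finset.card_univ, Fintype.card_option] at this
  omega

lemma path_length {p : List V} (hnd : p.Nodup) (hcom : ∀ x : V, x ∈ p) :
    p.length = Fintype.card V := by
  have huniv : p.toFinset = Finset.univ :=
    Finset.eq_univ_iff_forall.2 fun x => List.mem_toFinset.2 (hcom x)
  have := List.toFinset_card_of_nodup hnd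
  rw [huniv, Finset.card_univ] at this
  omega

lemma ham_lower {h : List (Option V)} (hh : IsHamCycle h) (h2 : 2 ≤ h.length) :
    (h.length : ℝ) ≤ cycleWeightD (gDist G) h := by
  have hL : ((h.zip (h.rotate 1)).map fun p => gDist G p.1 p.2).length = h.length := by
    rw [List.length_map, zipRot_length]
  rw [cycleWeightD, ← hL]
  refine len_le_sum _ fun x hx => ?_
  obtain ⟨q, hq, rfl⟩ := List.mem_map.1 hx
  exact gd_one_le G (zipRot_ne hh.1 h2 hq)

lemma conforms_of_ham (T : ParentTree (Option V)) (hpar : ∀ w : Option V, T.parent w = none)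
    {h : List (Option V)} (hh : IsHamCycle h) : CycleConforms T h := by
  have hiter : ∀ (k : ℕ) (b : Option V), T.parent^[k] b = b ∨ T.parent^[k] b = none := by
    intro k b
    cases k with
    | zero => left; rfl
    | succ m => right; rw [Function.iterate_succ_apply', hpar]
  intro u
  match u with
  | none =>
    have hdesc : T.desc none = Set.univ := by
      ext b
      simp only [ParentTree.desc, Set.mem_setOf_eq, Set.mem_univ, iff_true]
      exact ⟨1, by simp [hpar]⟩
    rw [hdesc]
    refine ⟨0, ?_⟩
    have hcard : (Set.univ : Set (Option V)).ncard = h.length := by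
      rw [Set.ncard_univ, Nat.card_eq_fintype_card, Fintype.card_option, ham_length hh]
    rw [List.rotate_zero, hcard, List.take_length]
    ext x
    simp [listSet, hh.2 x]
  | some v =>
    have hdesc : T.desc (some v) = {some v} := by
      ext b
      simp only [ParentTree.desc, Set.mem_setOf_eq, Set.mem_singleton_iff]
      constructor
      · rintro ⟨k, hk⟩
        rcases hiter k b with h' | h'
        · rw [h'] at hk; exact hk
        · rw [h'] at hk; exact absurd hk (by simp)
      · rintro rfl; exact ⟨0, rfl⟩
    rw [hdesc]
    have hmem : some v ∈ h := hh.2 (some v)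
    obtain ⟨i, hi, hix⟩ := List.mem_iff_getElem.1 hmem
    refine ⟨i, ?_⟩
    have hne : h.rotate i ≠ [] := by
      intro hc
      have := List.length_rotate h i
      rw [hc] at this
      simp at this
      omega
    rw [Set.ncard_singleton, take_one_of_ne_nil hne]
    have h0 : (h.rotate i)[0]'(by
        cases hq : h.rotate i with
        | nil => exact absurd hq hne
        | cons a t => simp [hq]) = some v := by
      rw [List.getElem_rotate]
      simp only [Nat.zero_add, Nat.mod_eq_of_lt hi]
      exact hix
    rw [h0]
    ext x
    simp [listSet]

lemma weight_of_chain (a : Option V) (t : List (Option V))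
    (hc : (a :: t).Chain' fun x y => gDist G x y = 1)
    (hlast : gDist G ((a :: t).getLast (by simp)) a = 1) :
    cycleWeightD (gDist G) (a :: t) = (a :: t).length := by
  rw [cycleWeightD, zipRot_decomp, List.map_append, List.sum_append]
  have hzip : (a :: t).zip t = (a :: t).zip (a :: t).tail := rfl
  rw [hzip, pathSum_chain _ _ (by simp) hc]
  simp only [List.map_cons, List.map_nil, List.sum_cons, List.sum_nil]
  rw [hlast]
  ring

lemma extract_path {h : List (Option V)} (hh : IsHamCycle h) (h2 : 2 ≤ h.length)
    (hones : ∀ p ∈ h.zip (h.rotate 1), gDist G p.1 p.2 = 1) :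
    ∃ p : List V, p.Nodup ∧ (∀ x : V, x ∈ p) ∧ p.Chain' G.Adj := by
  obtain ⟨k, hlt, hkx⟩ := List.mem_iff_getElem.1 (hh.2 (none : Option V))
  set g := h.rotate k with hgdef
  have hglen : g.length = h.length := List.length_rotate _ _
  have hgones : ∀ p ∈ g.zip (g.rotate 1), gDist G p.1 p.2 = 1 :=
    fun p hp => hones p (zipRot_rotate k hp)
  have hgnd : g.Nodup := List.nodup_rotate.2 hh.1
  have hgmem : ∀ x : Option V, x ∈ g := fun x => List.mem_rotate.2 (hh.2 x)
  have hg0 : g[0]? = some none := by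
    rw [hgdef, List.getElem?_rotate (by omega : 0 < h.length)]
    simp only [Nat.zero_add, Nat.mod_eq_of_lt hlt]
    rw [List.getElem?_eq_getElem hlt, hkx]
  obtain ⟨a, t, hgat⟩ : ∃ a t, g = a :: t := by
    cases hq : g with
    | nil => rw [hq] at hglen; simp at hglen; omega
    | cons a t => exact ⟨a, t, rfl⟩
  have hanone : a = none := by rw [hgat] at hg0; simpa using hg0
  subst hanone
  rw [hgat] at hgnd hgmem
  have hnonet : (none : Option V) ∉ t := (List.nodup_cons.1 hgnd).1
  have htnd : t.Nodup := (List.nodup_cons.1 hgnd).2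
  have hall : ∀ x ∈ t, x ≠ none := fun x hx hc => hnonet (hc ▸ hx)
  set p := t.filterMap id with hp
  have htp : t = p.map some := all_some_eq_map t hall
  refine ⟨p, ?_, ?_, ?_⟩
  · exact List.Nodup.of_map some (htp ▸ htnd)
  · intro v
    have : some v ∈ none :: t := hgmem (some v)
    have hvt : some v ∈ t := by
      rcases List.mem_cons.1 this with h' | h'
      · exact absurd h' (by simp)
      · exact h'
    rw [htp] at hvt
    obtain ⟨w, hw, hww⟩ := List.mem_map.1 hvt
    rwa [← Option.some_inj.1 hww]
  · -- Chain' on g from cyclic ones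
    have hcg : g.Chain' fun x y => gDist G x y = 1 := by
      refine (List.isChain_iff_getElem).2 ?_
      intro i hi
      have hi1 : i + 1 < g.length := by omega
      have hmod : (i + 1) % g.length = i + 1 := Nat.mod_eq_of_lt hi1
      have hmem' := zipRot_mem_of g i (by omega)
      have := hgones _ hmem'
      simp only [hmod] at this
      simpa [List.get_eq_getElem] using this
    rw [hgat] at hcg
    have hct : t.Chain' fun x y => gDist G x y = 1 := hcg.tail
    rw [htp] at hct
    have := (List.isChain_map some).1 hct
    exact this.imp fun x y hxy => adj_of_gd_one G hxy

end main

theorem stmt12 {V : Type} [Fintype V] [DecidableEq V] (hn : 3 ≤ Fintype.card V)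
    (G : SimpleGraph V) [DecidableRel G.Adj]
    (T : ParentTree (Option V))
    (hroot : T.root = none) (hpar : ∀ w : Option V, T.parent w = none) :
    sInf {w | ∃ h : List (Option V), IsHamCycle h ∧ CycleConforms T h ∧
        cycleWeightD (gDist G) h = w} = Fintype.card V + 1 ↔
    ∃ p : List V, p.Nodup ∧ (∀ x : V, x ∈ p) ∧ p.Chain' G.Adj := by
  set S : Set ℝ := {w | ∃ h : List (Option V), IsHamCycle h ∧ CycleConforms T h ∧
        cycleWeightD (gDist G) h = w} with hS
  have hlb : ∀ w ∈ S, (Fintype.card V : ℝ) + 1 ≤ w := by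
    rintro w ⟨h, hham, _, rfl⟩
    have hlen := ham_length hham
    have := ham_lower G hham (by omega)
    rw [hlen] at this
    push_cast at this
    linarith
  constructor
  · intro hInf
    have hne : S.Nonempty := by
      by_contra hemp
      rw [Set.not_nonempty_iff_eq_empty] at hemp
      rw [hemp, Real.sInf_empty] at hInf
      have : (3 : ℝ) ≤ Fintype.card V := by exact_mod_cast hn
      linarith
    have hlt : sInf S < (Fintype.card V : ℝ) + 2 := by rw [hInf]; linarith
    obtain ⟨w, hwS, hw⟩ := exists_lt_of_csInf_lt hne hlt
    obtain ⟨h, hham, _, rfl⟩ := hwS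
    have hlen := ham_length hham
    have h2 : 2 ≤ h.length := by omega
    set L : List ℝ := (h.zip (h.rotate 1)).map fun p => gDist G p.1 p.2 with hL
    have hLlen : L.length = h.length := by rw [hL, List.length_map, zipRot_length]
    have h12 : ∀ x ∈ L, x = 1 ∨ x = 2 := by
      intro x hx
      obtain ⟨q, hq, rfl⟩ := List.mem_map.1 hx
      exact gd_cases G (zipRot_ne hham.1 h2 hq)
    have hsum : L.sum < L.length + 1 := by
      have : cycleWeightD (gDist G) h = L.sum := rfl
      rw [this] at hw
      rw [hLlen, hlen]
      push_cast
      push_cast at hw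
      linarith
    have hones := all_one_of_sum_lt L h12 hsum
    refine extract_path G hham h2 fun p hp => ?_
    exact hones _ (List.mem_map.2 ⟨p, hp, rfl⟩)
  · rintro ⟨p, hnd, hcom, hch⟩
    have hplen : p.length = Fintype.card V := path_length hnd hcom
    have hpne : p ≠ [] := by
      intro hc
      rw [hc] at hplen
      simp at hplen
      omega
    have hham : IsHamCycle (none :: p.map some) := by
      constructor
      · rw [List.nodup_cons]
        exact ⟨by simp, hnd.map (Option.some_injective V)⟩
      · intro x
        match x with
        | none => simp
        | some v => simp [hcom v]
    have hlen : (none :: p.map some).length = Fintype.card V + 1 := ham_length hham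
    have hchain : (none :: p.map some).Chain' fun x y => gDist G x y = 1 := by
      refine (List.isChain_cons).2 ?_
      constructor
      · intro y hy
        have hym : y ∈ p.map some := List.mem_of_mem_head? hy
        obtain ⟨w, _, rfl⟩ := List.mem_map.1 hym
        rfl
      · exact (List.isChain_map some).2 (hch.imp fun a b hab => gd_of_adj G hab)
    have hmapne : p.map some ≠ [] := by simpa using hpne
    have hlast : gDist G ((none :: p.map some).getLast (by simp)) none = 1 := by
      have hgl : (none :: p.map some).getLast (by simp) = (p.map some).getLast hmapne :=
        List.getLast_cons hmapne
      have hmem : (p.map some).getLast hmapne ∈ p.map some := List.getLast_mem hmapne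
      obtain ⟨w, _, hw⟩ := List.mem_map.1 hmem
      rw [hgl, ← hw]
      rfl
    have hweight : cycleWeightD (gDist G) (none :: p.map some) = (Fintype.card V : ℝ) + 1 := by
      have := weight_of_chain G none (p.map some) hchain hlast
      rw [this, hlen]
      push_cast
      ring
    have hmemS : ((Fintype.card V : ℝ) + 1) ∈ S :=
      ⟨none :: p.map some, hham, conforms_of_ham T hpar hham, hweight⟩
    exact le_antisymm (csInf_le ⟨_, hlb⟩ hmemS) (le_csInf ⟨_, hmemS⟩ hlb)
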